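/- The subgroup of SL(2,ℤ) generated by the two matrices [[1,1],[0,1]] and [[1,0],[3,1]] is equal to the congruence subgroup Γ₁(3) = { [[a,b],[c,d]] ∈ SL(2,ℤ) : c ≡ 0 (mod 3), a ≡ 1 (mod 3), d ≡ 1 (mod 3) }. -/

import Mathlib

open Matrix

/-- The congruence subgroup `Γ₁(3)` of `SL(2,ℤ)`, consisting of the matrices `[[a,b],[c,d]]`
with `c ≡ 0 (mod 3)` and `a ≡ d ≡ 1 (mod 3)`. -/
def Gamma1 : Subgroup (SpecialLinearGroup (Fin 2) ℤ) where
  carrier := {A | A.1 1 0 ≡ 0 [ZMOD 3] ∧ A.1 0 0 ≡ 1 [ZMOD 3] ∧ A.1 1 1 ≡ 1 [ZMOD 3]}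
  one_mem' := by
    refine ⟨?_, ?_, ?_⟩ <;> simp [SpecialLinearGroup.coe_one, Matrix.one_apply]
  mul_mem' := by
    rintro A B ⟨hc, ha, hd⟩ ⟨hc', ha', hd'⟩
    have e : ∀ i j : Fin 2, ((A * B).1) i j = A.1 i 0 * B.1 0 j + A.1 i 1 * B.1 1 j := by
      intro i j
      change ((A : Matrix (Fin 2) (Fin 2) ℤ) * (B : Matrix (Fin 2) (Fin 2) ℤ)) i j = _
      rw [Matrix.mul_apply, Fin.sum_univ_two]
    refine ⟨?_, ?_, ?_⟩
    · show ((A * B).1) 1 0 ≡ 0 [ZMOD 3]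
      rw [e]
      simpa using (hc.mul ha').add (hd.mul hc')
    · show ((A * B).1) 0 0 ≡ 1 [ZMOD 3]
      rw [e]
      simpa using (ha.mul ha').add ((Int.ModEq.refl (A.1 0 1)).mul hc')
    · show ((A * B).1) 1 1 ≡ 1 [ZMOD 3]
      rw [e]
      simpa using (hc.mul (Int.ModEq.refl (B.1 0 1))).add (hd.mul hd')
  inv_mem' := by
    rintro A ⟨hc, ha, hd⟩
    show _ ∧ _ ∧ _
    rw [SpecialLinearGroup.SL2_inv_expl]
    refine ⟨?_, ?_, ?_⟩
    · simpa using hc.neg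
    · exact hd
    · exact ha

/-- The matrix `[[1,1],[0,1]]` in `SL(2,ℤ)`. -/
def Umat : SpecialLinearGroup (Fin 2) ℤ :=
  ⟨!![1, 1; 0, 1], by norm_num [Matrix.det_fin_two_of]⟩

/-- The matrix `[[1,0],[3,1]]` in `SL(2,ℤ)`. -/
def Lmat : SpecialLinearGroup (Fin 2) ℤ :=
  ⟨!![1, 0; 3, 1], by norm_num [Matrix.det_fin_two_of]⟩

/-- The matrix `[[1,n],[0,1]]`. -/
def umat (n : ℤ) : SpecialLinearGroup (Fin 2) ℤ :=
  ⟨!![1, n; 0, 1], by norm_num [Matrix.det_fin_two_of]⟩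

/-- The matrix `[[1,0],[3m,1]]`. -/
def lmat (m : ℤ) : SpecialLinearGroup (Fin 2) ℤ :=
  ⟨!![1, 0; 3 * m, 1], by norm_num [Matrix.det_fin_two_of]⟩

lemma umat_coe (n : ℤ) : (umat n).1 = !![1, n; 0, 1] := rfl

lemma lmat_coe (m : ℤ) : (lmat m).1 = !![1, 0; 3 * m, 1] := rfl

lemma sl2_mul_entry (X Y : SpecialLinearGroup (Fin 2) ℤ) (i j : Fin 2) :
    (X * Y).1 i j = X.1 i 0 * Y.1 0 j + X.1 i 1 * Y.1 1 j := by
  change ((X : Matrix (Fin 2) (Fin 2) ℤ) * (Y : Matrix (Fin 2) (Fin 2) ℤ)) i j = _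
  rw [Matrix.mul_apply, Fin.sum_univ_two]

lemma umat_mul_umat (a b : ℤ) : umat a * umat b = umat (a + b) := by
  apply Subtype.ext
  ext i j
  rw [sl2_mul_entry]
  fin_cases i <;> fin_cases j <;>
    simp [umat, Matrix.mul_apply, Fin.sum_univ_two] <;> ring

lemma lmat_mul_lmat (a b : ℤ) : lmat a * lmat b = lmat (a + b) := by
  apply Subtype.ext
  ext i j
  rw [sl2_mul_entry]
  fin_cases i <;> fin_cases j <;>
    simp [lmat, Matrix.mul_apply, Fin.sum_univ_two] <;> ring

lemma umat_zero : umat 0 = 1 := by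
  apply Subtype.ext
  ext i j
  fin_cases i <;> fin_cases j <;> simp [umat]

lemma lmat_zero : lmat 0 = 1 := by
  apply Subtype.ext
  ext i j
  fin_cases i <;> fin_cases j <;> simp [lmat]

lemma umat_one : umat 1 = Umat := rfl

lemma lmat_one : lmat 1 = Lmat := by
  apply Subtype.ext
  ext i j
  fin_cases i <;> fin_cases j <;> simp [lmat, Lmat]

lemma umat_mem (n : ℤ) : umat n ∈ Subgroup.closure {Umat, Lmat} := by
  have hU : Umat ∈ Subgroup.closure {Umat, Lmat} :=
    Subgroup.subset_closure (by simp)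
  induction n using Int.induction_on with
  | zero => rw [umat_zero]; exact one_mem _
  | succ k ih =>
    have : umat (k + 1) = umat k * Umat := by rw [← umat_one, umat_mul_umat]
    rw [this]; exact mul_mem ih hU
  | pred k ih =>
    have : umat (-k - 1) = umat (-k) * Umat⁻¹ := by
      rw [eq_mul_inv_iff_mul_eq, ← umat_one, umat_mul_umat]; ring_nf
    rw [this]; exact mul_mem ih (inv_mem hU)

lemma lmat_mem (m : ℤ) : lmat m ∈ Subgroup.closure {Umat, Lmat} := by
  have hL : Lmat ∈ Subgroup.closure {Umat, Lmat} :=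
    Subgroup.subset_closure (by simp)
  induction m using Int.induction_on with
  | zero => rw [lmat_zero]; exact one_mem _
  | succ k ih =>
    have : lmat (k + 1) = lmat k * Lmat := by rw [← lmat_one, lmat_mul_lmat]
    rw [this]; exact mul_mem ih hL
  | pred k ih =>
    have : lmat (-k - 1) = lmat (-k) * Lmat⁻¹ := by
      rw [eq_mul_inv_iff_mul_eq, ← lmat_one, lmat_mul_lmat]; ring_nf
    rw [this]; exact mul_mem ih (inv_mem hL)

/-- Division with centered remainder. -/
lemma exists_center_div (a c : ℤ) (hc : c ≠ 0) : ∃ n : ℤ, 2 * |a + n * c| ≤ |c| := by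
  have h1 : a % c + c * (a / c) = a := Int.emod_add_mul_ediv a c
  have h2 : 0 ≤ a % c := Int.emod_nonneg a hc
  have h3 : a % c < |c| := Int.emod_lt_abs a hc
  rcases le_or_gt (2 * (a % c)) |c| with h | h
  · refine ⟨-(a / c), ?_⟩
    have he : a + -(a / c) * c = a % c := by linear_combination -h1
    rw [he, abs_of_nonneg h2]; exact h
  · rcases hc.lt_or_gt with hneg | hpos
    · refine ⟨-(a / c) + 1, ?_⟩
      have habs : |c| = -c := abs_of_neg hneg
      have he : a + (-(a / c) + 1) * c = a % c - |c| := by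
        rw [habs]; linear_combination -h1
      rw [he, abs_of_nonpos (by linarith)]; linarith
    · refine ⟨-(a / c) - 1, ?_⟩
      have habs : |c| = c := abs_of_pos hpos
      have he : a + (-(a / c) - 1) * c = a % c - |c| := by
        rw [habs]; linear_combination -h1
      rw [he, abs_of_nonpos (by linarith)]; linarith

lemma umat_mem_Gamma1 (n : ℤ) : umat n ∈ Gamma1 := by
  refine ⟨?_, ?_, ?_⟩ <;> simp [umat, Int.ModEq]

lemma lmat_mem_Gamma1 (m : ℤ) : lmat m ∈ Gamma1 := by
  refine ⟨?_, ?_, ?_⟩ <;> simp [lmat, Int.ModEq, Int.mul_emod_right]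

/-- The subgroup of `SL(2,ℤ)` generated by `[[1,1],[0,1]]` and `[[1,0],[3,1]]` is equal to
the congruence subgroup `Γ₁(3) = { [[a,b],[c,d]] ∈ SL(2,ℤ) : c ≡ 0, a ≡ d ≡ 1 (mod 3) }`. -/
theorem winger_generators_of_Gamma1 :
    Subgroup.closure {Umat, Lmat} = Gamma1 := by
  apply le_antisymm
  · rw [Subgroup.closure_le]
    rintro x (rfl | rfl)
    · exact umat_mem_Gamma1 1
    · rw [← lmat_one]; exact lmat_mem_Gamma1 1
  · intro A hA
    suffices H : ∀ k : ℕ, ∀ A : SpecialLinearGroup (Fin 2) ℤ, A ∈ Gamma1 →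
        (A.1 1 0).natAbs = k → A ∈ Subgroup.closure {Umat, Lmat} from
      H (A.1 1 0).natAbs A hA rfl
    intro k
    induction k using Nat.strong_induction_on with
    | _ k ih =>
      intro A hA hk
      obtain ⟨hc, ha, hd⟩ := hA
      set a := A.1 0 0 with ha00
      set b := A.1 0 1 with ha01
      set c := A.1 1 0 with ha10
      set d := A.1 1 1 with ha11
      have hdvd : (3 : ℤ) ∣ c := (Int.modEq_zero_iff_dvd).mp hc
      have hdet : a * d - b * c = 1 := by
        have h := A.2
        rwa [Matrix.det_fin_two] at h
      by_cases hc0 : c = 0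
      · -- c = 0 : then a = d = 1 and A = umat b
        have had : a * d = 1 := by rw [hc0] at hdet; linarith
        have ha1 : a = 1 := by
          rcases Int.isUnit_iff.mp (IsUnit.of_mul_eq_one (a := a) d had) with h1 | h1
          · exact h1
          · exfalso
            have h2 := ha.dvd
            rw [h1] at h2
            omega
        have hd1 : d = 1 := by rw [ha1, one_mul] at had; exact had
        have hAeq : A = umat b := by
          apply Subtype.ext
          rw [Matrix.eta_fin_two A.1, ← ha00, ← ha01, ← ha10, ← ha11, ha1, hd1, hc0]
          rfl
        rw [hAeq]; exact umat_mem b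
      · -- c ≠ 0 : reduce
        obtain ⟨n, hn⟩ := exists_center_div a c hc0
        set a' := a + n * c with ha'
        have ha'mod : a' ≡ 1 [ZMOD 3] := by
          have h : (3:ℤ) ∣ n * c := hdvd.mul_left n
          have h2 : a + n * c ≡ a + 0 [ZMOD 3] :=
            Int.ModEq.add_left a ((Int.modEq_zero_iff_dvd).mpr h)
          have h3 : a + 0 ≡ 1 [ZMOD 3] := by rwa [add_zero]
          exact h2.trans h3
        have ha'0 : a' ≠ 0 := by
          intro h0
          have h1 := ha'mod.dvd
          rw [h0] at h1
          omega
        have h3a' : (3 : ℤ) * a' ≠ 0 := mul_ne_zero (by norm_num) ha'0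
        obtain ⟨m, hm⟩ := exists_center_div c (3 * a') h3a'
        set c' := c + m * (3 * a') with hc'
        have hlt : |c'| < |c| := by
          have h1 : |3 * a'| = 3 * |a'| := by rw [abs_mul]; norm_num
          have h2 : 0 < |c| := abs_pos.mpr hc0
          rw [h1] at hm
          linarith
        set B := lmat m * (umat n * A) with hB
        have hBg : B ∈ Gamma1 :=
          mul_mem (lmat_mem_Gamma1 m) (mul_mem (umat_mem_Gamma1 n) ⟨hc, ha, hd⟩)
        have hB10 : B.1 1 0 = c' := by
          rw [hB, sl2_mul_entry, sl2_mul_entry, sl2_mul_entry]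
          simp [lmat_coe, umat_coe]
          rw [← ha00, ← ha10, hc', ha']
          ring
        have hBlt : (B.1 1 0).natAbs < k := by
          rw [hB10]
          have h4 : (c'.natAbs : ℤ) < (c.natAbs : ℤ) := by
            rwa [← Int.abs_eq_natAbs, ← Int.abs_eq_natAbs]
          have h5 : c'.natAbs < c.natAbs := by exact_mod_cast h4
          omega
        have hBmem : B ∈ Subgroup.closure {Umat, Lmat} :=
          ih (B.1 1 0).natAbs hBlt B hBg rfl
        have hAeq : A = (umat n)⁻¹ * ((lmat m)⁻¹ * B) := by rw [hB]; group
        rw [hAeq]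
        exact mul_mem (inv_mem (umat_mem n)) (mul_mem (inv_mem (lmat_mem m)) hBmem)
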